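/- Let C be an abelian category with enough projectives, and suppose X is an object of C of projective dimension exactly 1, with projective resolution 0 → P_1 →^s P_0 → X → 0 (so P_0, P_1 are projective and s is a monomorphism). Consider the commutative diagram whose top row is the span P_1 ←^{id} P_1 →^{id} P_1, whose bottom row is the span P_0 ←^s P_1 →^s P_0, and whose vertical maps are s, id_{P_1}, s. Every horizontal map in this diagram is a monomorphism and every vertical map is a stable equivalence, but the induced map of pushouts P_1 ⊔_{P_1} P_1 → P_0 ⊔_{P_1} P_0 is not a stable equivalence. In particular, homotopy pushouts fail to be well-defined in any abelian category with enough projectives containing an object of positive finite projective dimension. -/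

import Mathlib

open CategoryTheory Limits

universe v u

/-- A morphism factors through a projective object. -/
def FactorsThroughProjective {C : Type u} [Category.{v} C]
    {X Y : C} (f : X ⟶ Y) : Prop :=
  ∃ (P : C) (_ : Projective P) (g : X ⟶ P) (h : P ⟶ Y), g ≫ h = f

/-- A morphism `f : X ⟶ Y` is a stable equivalence if there is `h : Y ⟶ X`
such that `h ∘ f` is stably equivalent to `id_X` and `f ∘ h` is stably
equivalent to `id_Y`. -/
def IsStableEquiv {C : Type u} [Category.{v} C] [Preadditive C]
    {X Y : C} (f : X ⟶ Y) : Prop :=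
  ∃ h : Y ⟶ X, FactorsThroughProjective (f ≫ h - 𝟙 X) ∧
    FactorsThroughProjective (h ≫ f - 𝟙 Y)

/-- A retract of a projective object is projective. -/
lemma projective_of_retract {C : Type u} [Category.{v} C] {Q Z : C}
    (hZ : Projective Z) (i : Q ⟶ Z) (p : Z ⟶ Q) (hip : i ≫ p = 𝟙 Q) :
    Projective Q where
  factors {E E'} f e he := by
    obtain ⟨g, hg⟩ := hZ.factors (p ≫ f) e
    exact ⟨i ≫ g, by rw [Category.assoc, hg, ← Category.assoc, hip, Category.id_comp]⟩

/-- Let `C` be an abelian category with enough projectives,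
and let `X` be an object of projective dimension exactly `1`, with projective
resolution `0 → P₁ →ˢ P₀ → X → 0` (so `P₀`, `P₁` are projective, `s` is a
monomorphism and `X` is not projective).  In the commutative diagram whose top
row is the span `P₁ ← P₁ → P₁` (identities), whose bottom row is the span
`P₀ ←ˢ P₁ →ˢ P₀`, and whose vertical maps are `s`, `id`, `s`, every horizontal
map is a monomorphism and every vertical map is a stable equivalence, but the
induced map of pushouts `P₁ ⊔_{P₁} P₁ ⟶ P₀ ⊔_{P₁} P₀` is not a stable
equivalence. -/
theorem homotopy_pushouts_not_well_defined
    {C : Type u} [Category.{v} C] [Abelian C] [EnoughProjectives C]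
    {X P₀ P₁ : C} (hP₀ : Projective P₀) (hP₁ : Projective P₁)
    (hX : ¬ Projective X)
    (s : P₁ ⟶ P₀) (π : P₀ ⟶ X) (w : s ≫ π = 0)
    (hse : (ShortComplex.mk s π w).ShortExact) :
    (Mono s ∧ Mono (𝟙 P₁)) ∧
    (IsStableEquiv s ∧ IsStableEquiv (𝟙 P₁)) ∧
    ¬ IsStableEquiv (pushout.map (𝟙 P₁) (𝟙 P₁) s s s s (𝟙 P₁)
        (by simp) (by simp)) := by
  have mono_s : Mono s := hse.mono_f
  have epi_π : Epi π := hse.epi_g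
  refine ⟨⟨mono_s, inferInstance⟩, ⟨⟨0, ⟨P₁, hP₁, -𝟙 P₁, 𝟙 P₁, by simp⟩,
      ⟨P₀, hP₀, -𝟙 P₀, 𝟙 P₀, by simp⟩⟩,
    ⟨𝟙 P₁, ⟨P₁, hP₁, 0, 0, by simp⟩, ⟨P₁, hP₁, 0, 0, by simp⟩⟩⟩, ?_⟩
  rintro ⟨h, -, P, hP, g, k, hgk⟩
  have hgk' : 𝟙 (pushout s s) =
      h ≫ pushout.map (𝟙 P₁) (𝟙 P₁) s s s s (𝟙 P₁) (by simp) (by simp) - g ≫ k := by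
    rw [hgk]; abel
  -- D is projective: retract of P₁
  have hD : Projective (pushout (𝟙 P₁) (𝟙 P₁)) := by
    refine projective_of_retract hP₁ (pushout.desc (𝟙 P₁) (𝟙 P₁) (by simp))
      (pushout.inl _ _) ?_
    apply pushout.hom_ext
    · simp [pushout.inl_desc_assoc]
    · have := pushout.condition (f := 𝟙 P₁) (g := 𝟙 P₁)
      simp only [Category.id_comp] at this
      simp [← this, pushout.inl_desc_assoc]
  -- Q is projective: retract of D ⊞ P
  have hQ : Projective (pushout s s) := by
    haveI := hD; haveI := hP
    refine projective_of_retract (Z := pushout (𝟙 P₁) (𝟙 P₁) ⊞ P) inferInstance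
      (biprod.lift h g)
      (biprod.desc (pushout.map (𝟙 P₁) (𝟙 P₁) s s s s (𝟙 P₁) (by simp) (by simp)) (-k)) ?_
    rw [hgk']
    simp only [biprod.lift_desc, Preadditive.comp_neg]
    abel
  -- X is a retract of Q
  have cond : s ≫ (pushout.inr s s - pushout.inl s s) = 0 := by
    simp [Preadditive.comp_sub, pushout.condition]
  obtain ⟨u, hu⟩ := CokernelCofork.IsColimit.desc' hse.gIsCokernel
    (pushout.inr s s - pushout.inl s s) cond
  simp only [CokernelCofork.π_ofπ] at hu
  have hX' : Projective X := by
    refine projective_of_retract hQ u (pushout.desc 0 π (by simp [w])) ?_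
    rw [← cancel_epi π, ← Category.assoc, hu]
    simp [Preadditive.sub_comp, pushout.inl_desc, pushout.inr_desc]
  exact hX hX'
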